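/- In Setup B, let J₁, J₂ ∈ Λ with integer data c¹ = (c¹_i)_{i∈J₁} and c² = (c²_i)_{i∈J₂} (and a choice of i₀ ∈ I'∖J made for each of J₁, J₂ that contains n+1, defining the corresponding F-set). If C(J₁,c¹) ⊆ C(J₂,c²), then F(J₁,c¹) ⊆ F(J₂,c²). -/

import Mathlib

open scoped RealInnerProductSpace BigOperators

noncomputable section

/-- Euclidean space `ℝⁿ` with the standard inner product. -/
abbrev E (n : ℕ) : Type := EuclideanSpace ℝ (Fin n)

/-- The index set `I' = {1,…,n'}` inside `Ī = {1,…,n+1}` (index `Fin.last n`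
plays the role of `n+1`). -/
def Iprime (n n' : ℕ) : Finset (Fin (n + 1)) := Finset.univ.filter fun i => i.val < n'

/-- `C(J,c) := {x ∈ ℝⁿ : ⟨x, b_i⟩ > c_i for all i ∈ J}`. -/
def CSet (n : ℕ) (b : Fin (n + 1) → E n) (J : Finset (Fin (n + 1)))
    (c : Fin (n + 1) → ℤ) : Set (E n) :=
  {x | ∀ i ∈ J, (c i : ℝ) < ⟪x, b i⟫}

/-- A multi-index `𝔪 = (m_i)_{i ∈ I'∖{i₀}}` is admissible if `m_i ≥ 0` for every
`i ∈ I' ∩ J` (recall `i₀ ∉ J`). -/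
def Admissible (n n' : ℕ) (J : Finset (Fin (n + 1))) (m : Fin (n + 1) → ℤ) : Prop :=
  ∀ i ∈ Iprime n n' ∩ J, 0 ≤ m i

/-- The ceiling bound
`⌈(c_{n+1} − Σ_{i∈I'∩J} α_i(c_i+m_i) − Σ_{i∈I'∩K₁} α_i m_i)/α_{i₀}⌉`,
where `K₁ = Ī∖(J∪{i₀})`, so `I'∩K₁ = (I'∖J)∖{i₀}`. -/
def ceilB (n n' : ℕ) (α : Fin (n + 1) → ℚ) (J : Finset (Fin (n + 1)))
    (i₀ : Fin (n + 1)) (c m : Fin (n + 1) → ℤ) : ℤ :=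
  ⌈((c (Fin.last n) : ℚ) - ∑ i ∈ Iprime n n' ∩ J, α i * ((c i : ℚ) + (m i : ℚ))
      - ∑ i ∈ (Iprime n n' \ J).erase i₀, α i * (m i : ℚ)) / α i₀⌉

/-- `V(J,c,𝔪)` as in Setup B. -/
def VSet (n n' : ℕ) (b : Fin (n + 1) → E n) (α : Fin (n + 1) → ℚ)
    (J : Finset (Fin (n + 1))) (i₀ : Fin (n + 1)) (c m : Fin (n + 1) → ℤ) :
    Set (E n) :=
  {x | (∀ i ∈ Iprime n n' ∩ J, ((c i : ℝ) + (m i : ℝ)) < ⟪x, b i⟫)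
    ∧ (∀ i ∈ (Iprime n n' \ J).erase i₀, (m i : ℝ) < ⟪x, b i⟫)
    ∧ (∀ i ∈ (J \ Iprime n n').erase (Fin.last n), (c i : ℝ) < ⟪x, b i⟫)
    ∧ ((ceilB n n' α J i₀ c m : ℝ) < ⟪x, b i₀⟫)}

/-- `F(J,c) := ⋃_{𝔪 admissible} V(J,c,𝔪)` (for `n+1 ∈ J`, with the choice `i₀`). -/
def FSetB (n n' : ℕ) (b : Fin (n + 1) → E n) (α : Fin (n + 1) → ℚ)
    (J : Finset (Fin (n + 1))) (i₀ : Fin (n + 1)) (c : Fin (n + 1) → ℤ) : Set (E n) :=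
  {x | ∃ m : Fin (n + 1) → ℤ, Admissible n n' J m ∧ x ∈ VSet n n' b α J i₀ c m}

/-- `F(J,c)` in general: the union above when `n+1 ∈ J`, and `C(J,c)` otherwise. -/
def FSetB' (n n' : ℕ) (b : Fin (n + 1) → E n) (α : Fin (n + 1) → ℚ)
    (J : Finset (Fin (n + 1))) (i₀ : Fin (n + 1)) (c : Fin (n + 1) → ℤ) : Set (E n) :=
  if Fin.last n ∈ J then FSetB n n' b α J i₀ c else CSet n b J c

/-! ### Auxiliary lemmas -/


lemma mem_Iprime {n n' : ℕ} {i : Fin (n + 1)} : i ∈ Iprime n n' ↔ i.val < n' := by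
  simp [Iprime]

lemma Iprime_ne_last {n n' : ℕ} (hn'n : n' ≤ n) {i : Fin (n + 1)}
    (hi : i ∈ Iprime n n') : i ≠ Fin.last n := by
  rw [mem_Iprime] at hi
  intro h
  rw [h] at hi
  simp only [Fin.val_last] at hi
  omega

lemma exists_inner_eq (n : ℕ) (b : Fin (n + 1) → E n)
    (hspan : Submodule.span ℝ (Set.range fun i : Fin n => b i.castSucc) = ⊤)
    (y : Fin n → ℝ) : ∃ x : E n, ∀ i : Fin n, ⟪x, b i.castSucc⟫ = y i := by
  set T : E n →ₗ[ℝ] (Fin n → ℝ) :=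
    LinearMap.pi (fun i => (innerSL ℝ (b i.castSucc)).toLinearMap) with hT
  have hinj : Function.Injective T := by
    rw [← LinearMap.ker_eq_bot, Submodule.eq_bot_iff]
    intro x hx
    have h0 : ∀ i : Fin n, ⟪b i.castSucc, x⟫ = 0 := fun i =>
      congrFun (LinearMap.mem_ker.mp hx) i
    have hx' : x ∈ (Submodule.span ℝ (Set.range fun i : Fin n => b i.castSucc))ᗮ := by
      rw [Submodule.mem_orthogonal]
      intro u hu
      induction hu using Submodule.span_induction with
      | mem z hz => obtain ⟨i, rfl⟩ := hz; exact h0 i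
      | zero => simp
      | add u v hu hv hu' hv' => rw [inner_add_left, hu', hv', add_zero]
      | smul a u hu hu' => rw [inner_smul_left, hu', mul_zero]
    rw [hspan, Submodule.top_orthogonal_eq_bot] at hx'
    simpa using hx'
  have hfr : Module.finrank ℝ (E n) = Module.finrank ℝ (Fin n → ℝ) := by
    simp [finrank_euclideanSpace_fin]
  obtain ⟨x, hx⟩ :=
    (LinearMap.injective_iff_surjective_of_finrank_eq_finrank hfr).mp hinj y
  refine ⟨x, fun i => ?_⟩
  have := congrFun hx i
  simp only [hT, LinearMap.pi_apply, ContinuousLinearMap.coe_coe, innerSL_apply_apply] at this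
  rw [real_inner_comm]
  exact this

lemma inner_last {n n' : ℕ} (b : Fin (n + 1) → E n) (α : Fin (n + 1) → ℚ)
    (hlast : b (Fin.last n) = ∑ i ∈ Iprime n n', (α i : ℝ) • b i) (x : E n) :
    ⟪x, b (Fin.last n)⟫ = ∑ i ∈ Iprime n n', (α i : ℝ) * ⟪x, b i⟫ := by
  rw [hlast, inner_sum]
  exact Finset.sum_congr rfl fun i _ => real_inner_smul_right _ _ _

lemma sum_split {ι M : Type*} [DecidableEq ι] [AddCommMonoid M] (s J : Finset ι)
    (f : ι → M) : ∑ i ∈ s, f i = ∑ i ∈ s ∩ J, f i + ∑ i ∈ s \ J, f i := by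
  have hd : Disjoint (s ∩ J) (s \ J) :=
    (Finset.disjoint_of_subset_left Finset.inter_subset_right
      Finset.sdiff_disjoint.symm)
  rw [← Finset.sum_union hd]
  congr 1
  rw [Finset.union_comm]
  exact (Finset.sdiff_union_inter s J).symm

lemma erase_split {n n' : ℕ} {M : Type*} [AddCommMonoid M] (J : Finset (Fin (n + 1)))
    {i₀ : Fin (n + 1)} (hi₀J : i₀ ∉ J) (f : Fin (n + 1) → M) :
    ∑ i ∈ (Iprime n n').erase i₀, f i
      = ∑ i ∈ Iprime n n' ∩ J, f i + ∑ i ∈ (Iprime n n' \ J).erase i₀, f i := by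
  rw [sum_split ((Iprime n n').erase i₀) J]
  congr 2
  · ext i
    simp only [Finset.mem_inter, Finset.mem_erase]
    constructor
    · rintro ⟨⟨_, h1⟩, h2⟩; exact ⟨h1, h2⟩
    · rintro ⟨h1, h2⟩; exact ⟨⟨fun he => hi₀J (he ▸ h2), h1⟩, h2⟩
  · ext i
    simp only [Finset.mem_sdiff, Finset.mem_erase]
    tauto

/-- The integer lower bound on `⟨x, b i⟩`, `i ∈ I'`, implied by membership in `V(J,c,m)`. -/
def Lfun (n n' : ℕ) (α : Fin (n + 1) → ℚ) (J : Finset (Fin (n + 1)))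
    (i₀ : Fin (n + 1)) (c m : Fin (n + 1) → ℤ) : Fin (n + 1) → ℤ := fun i =>
  if i ∈ J then c i + m i else if i = i₀ then ceilB n n' α J i₀ c m else m i

lemma L_lt {n n' : ℕ} {b : Fin (n + 1) → E n} {α : Fin (n + 1) → ℚ}
    {J : Finset (Fin (n + 1))} {i₀ : Fin (n + 1)} {c m : Fin (n + 1) → ℤ} {x : E n}
    (hx : x ∈ VSet n n' b α J i₀ c m) :
    ∀ i ∈ Iprime n n', ((Lfun n n' α J i₀ c m i : ℝ)) < ⟪x, b i⟫ := by
  obtain ⟨h1, h2, _h3, h4⟩ := hx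
  intro i hi
  by_cases hiJ : i ∈ J
  · have := h1 i (Finset.mem_inter.mpr ⟨hi, hiJ⟩)
    simp only [Lfun, if_pos hiJ]
    push_cast
    exact this
  · by_cases hii : i = i₀
    · subst hii
      simp only [Lfun, if_neg hiJ, if_pos rfl]
      exact h4
    · have := h2 i (Finset.mem_erase.mpr ⟨hii, Finset.mem_sdiff.mpr ⟨hi, hiJ⟩⟩)
      simp only [Lfun, if_neg hiJ, if_neg hii]
      exact this

/-- Rewriting the two sums in the numerator of `ceilB` in terms of a single
function `L` of integer lower bounds. -/
lemma numer_sum_eq {n n' : ℕ} (α : Fin (n + 1) → ℚ) (J : Finset (Fin (n + 1)))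
    {i₀ : Fin (n + 1)} (hi₀J : i₀ ∉ J) (c m L : Fin (n + 1) → ℤ)
    (h1 : ∀ i ∈ Iprime n n' ∩ J, c i + m i = L i)
    (h2 : ∀ i ∈ (Iprime n n' \ J).erase i₀, m i = L i) :
    ∑ i ∈ Iprime n n' ∩ J, α i * ((c i : ℚ) + (m i : ℚ))
      + ∑ i ∈ (Iprime n n' \ J).erase i₀, α i * (m i : ℚ)
      = ∑ i ∈ (Iprime n n').erase i₀, α i * (L i : ℚ) := by
  rw [erase_split (n' := n') J hi₀J (fun i => α i * (L i : ℚ))]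
  congr 1
  · refine Finset.sum_congr rfl fun i hi => ?_
    have := h1 i hi
    congr 1
    exact_mod_cast congrArg (Int.cast : ℤ → ℚ) this
  · refine Finset.sum_congr rfl fun i hi => ?_
    rw [h2 i hi]

lemma L_sum {n n' : ℕ} (α : Fin (n + 1) → ℚ) (J : Finset (Fin (n + 1)))
    {i₀ : Fin (n + 1)} (hα : ∀ i : Fin (n + 1), i.val < n' → 0 < α i)
    (hi₀I : i₀ ∈ Iprime n n') (hi₀J : i₀ ∉ J) (c m : Fin (n + 1) → ℤ) :
    (c (Fin.last n) : ℚ)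
      ≤ ∑ i ∈ Iprime n n', α i * (Lfun n n' α J i₀ c m i : ℚ) := by
  have hα₀ : 0 < α i₀ := hα i₀ (mem_Iprime.mp hi₀I)
  set L := Lfun n n' α J i₀ c m with hL
  set N : ℚ := (c (Fin.last n) : ℚ)
      - ∑ i ∈ Iprime n n' ∩ J, α i * ((c i : ℚ) + (m i : ℚ))
      - ∑ i ∈ (Iprime n n' \ J).erase i₀, α i * (m i : ℚ) with hN
  have hceil : N / α i₀ ≤ ((ceilB n n' α J i₀ c m : ℤ) : ℚ) := Int.le_ceil _
  have hmul : N ≤ α i₀ * (ceilB n n' α J i₀ c m : ℚ) := by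
    have h := mul_le_mul_of_nonneg_left hceil hα₀.le
    rwa [mul_div_cancel₀ _ hα₀.ne'] at h
  have hnum : ∑ i ∈ Iprime n n' ∩ J, α i * ((c i : ℚ) + (m i : ℚ))
      + ∑ i ∈ (Iprime n n' \ J).erase i₀, α i * (m i : ℚ)
      = ∑ i ∈ (Iprime n n').erase i₀, α i * (L i : ℚ) := by
    refine numer_sum_eq α J hi₀J c m L ?_ ?_
    · intro i hi
      rw [Finset.mem_inter] at hi
      simp [hL, Lfun, if_pos hi.2]
    · intro i hi
      rw [Finset.mem_erase, Finset.mem_sdiff] at hi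
      simp [hL, Lfun, if_neg hi.2.2, if_neg hi.1]
  have hL₀ : L i₀ = ceilB n n' α J i₀ c m := by
    simp [hL, Lfun, if_neg hi₀J]
  rw [← Finset.add_sum_erase _ _ hi₀I, hL₀]
  have : (c (Fin.last n) : ℚ)
      = N + ∑ i ∈ (Iprime n n').erase i₀, α i * (L i : ℚ) := by
    rw [hN, ← hnum]; ring
  rw [this]
  linarith [hmul]

lemma ceilB_le {n n' : ℕ} (α : Fin (n + 1) → ℚ) (J : Finset (Fin (n + 1)))
    {i₀ : Fin (n + 1)} (hα : ∀ i : Fin (n + 1), i.val < n' → 0 < α i)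
    (hi₀I : i₀ ∈ Iprime n n') (hi₀J : i₀ ∉ J) (c m L : Fin (n + 1) → ℤ)
    (h1 : ∀ i ∈ Iprime n n' ∩ J, c i + m i = L i)
    (h2 : ∀ i ∈ (Iprime n n' \ J).erase i₀, m i = L i)
    (hsum : (c (Fin.last n) : ℚ) ≤ ∑ i ∈ Iprime n n', α i * (L i : ℚ)) :
    ceilB n n' α J i₀ c m ≤ L i₀ := by
  have hα₀ : 0 < α i₀ := hα i₀ (mem_Iprime.mp hi₀I)
  rw [ceilB, Int.ceil_le]
  rw [div_le_iff₀ hα₀]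
  have hnum := numer_sum_eq (n' := n') α J hi₀J c m L h1 h2
  rw [← Finset.add_sum_erase _ _ hi₀I] at hsum
  push_cast
  nlinarith [hsum, hnum]

lemma VSet_subset_CSet {n n' : ℕ} (hn'1 : 1 ≤ n') (hn'n : n' ≤ n)
    {b : Fin (n + 1) → E n} {α : Fin (n + 1) → ℚ}
    (hα : ∀ i : Fin (n + 1), i.val < n' → 0 < α i)
    (hlast : b (Fin.last n) = ∑ i ∈ Iprime n n', (α i : ℝ) • b i)
    {J : Finset (Fin (n + 1))} {i₀ : Fin (n + 1)} {c m : Fin (n + 1) → ℤ}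
    (hi₀I : i₀ ∈ Iprime n n') (hi₀J : i₀ ∉ J) (hm : Admissible n n' J m) :
    VSet n n' b α J i₀ c m ⊆ CSet n b J c := by
  intro x hx i hiJ
  by_cases hil : i = Fin.last n
  · subst hil
    rw [inner_last b α hlast]
    have h1 : ∀ i ∈ Iprime n n',
        (α i : ℝ) * (Lfun n n' α J i₀ c m i : ℝ) < (α i : ℝ) * ⟪x, b i⟫ := fun i hi =>
      mul_lt_mul_of_pos_left (L_lt hx i hi)
        (by exact_mod_cast hα i (mem_Iprime.mp hi))
    have hne : (Iprime n n').Nonempty :=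
      ⟨⟨0, by omega⟩, mem_Iprime.mpr (by simpa using (show 0 < n' from hn'1))⟩
    have h2 := Finset.sum_lt_sum_of_nonempty hne h1
    have h3 : (c (Fin.last n) : ℝ)
        ≤ ∑ i ∈ Iprime n n', (α i : ℝ) * (Lfun n n' α J i₀ c m i : ℝ) := by
      have h := L_sum α J hα hi₀I hi₀J c m
      have h' := (Rat.cast_le (K := ℝ)).mpr h
      push_cast at h'
      exact h'
    exact lt_of_le_of_lt h3 h2
  · by_cases hiI : i ∈ Iprime n n'
    · have hlt := hx.1 i (Finset.mem_inter.mpr ⟨hiI, hiJ⟩)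
      have hm' := hm i (Finset.mem_inter.mpr ⟨hiI, hiJ⟩)
      have : (c i : ℝ) ≤ (c i : ℝ) + (m i : ℝ) := by
        have : (0 : ℝ) ≤ (m i : ℝ) := by exact_mod_cast hm'
        linarith
      linarith
    · exact hx.2.2.1 i
        (Finset.mem_erase.mpr ⟨hil, Finset.mem_sdiff.mpr ⟨hiJ, hiI⟩⟩)

/-- Extraction: the inclusion of the cones forces `J₂ ⊆ J₁` and `c₂ ≤ c₁` on `J₂`. -/
lemma extract {n n' : ℕ} (hn'1 : 1 ≤ n') (hn'n : n' ≤ n)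
    (b : Fin (n + 1) → E n) (α : Fin (n + 1) → ℚ)
    (hspan : Submodule.span ℝ (Set.range fun i : Fin n => b i.castSucc) = ⊤)
    (hα : ∀ i : Fin (n + 1), i.val < n' → 0 < α i)
    (hlast : b (Fin.last n) = ∑ i ∈ Iprime n n', (α i : ℝ) • b i)
    {J₁ J₂ : Finset (Fin (n + 1))}
    (hJ₁I : ¬ Iprime n n' ⊆ J₁) (hJ₂I : ¬ Iprime n n' ⊆ J₂)
    {c₁ c₂ : Fin (n + 1) → ℤ}
    (hC : CSet n b J₁ c₁ ⊆ CSet n b J₂ c₂) :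
    ∀ j ∈ J₂, j ∈ J₁ ∧ c₂ j ≤ c₁ j := by
  intro j hj
  by_contra hcon
  push_neg at hcon
  by_cases hjl : j = Fin.last n
  · -- j = n+1 case
    subst hjl
    obtain ⟨k, hkI, hkJ₁⟩ := Finset.not_subset.mp hJ₁I
    have hαk : (0 : ℝ) < (α k : ℝ) := by exact_mod_cast hα k (mem_Iprime.mp hkI)
    set S : ℝ := ∑ i ∈ (Iprime n n').erase k, (α i : ℝ) * ((c₁ i : ℝ) + 1) with hS
    set y : Fin (n + 1) → ℝ :=
      fun i => if i = k then ((c₂ (Fin.last n) : ℝ) - S) / (α k : ℝ)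
        else (c₁ i : ℝ) + 1 with hy
    obtain ⟨x, hxc⟩ := exists_inner_eq n b hspan (fun i => y i.castSucc)
    have hxy : ∀ i : Fin (n + 1), i ≠ Fin.last n → ⟪x, b i⟫ = y i := by
      intro i hi
      have h := hxc (i.castPred hi)
      rwa [Fin.castSucc_castPred] at h
    have hsum : ∑ i ∈ Iprime n n', (α i : ℝ) * y i = (c₂ (Fin.last n) : ℝ) := by
      rw [← Finset.add_sum_erase _ _ hkI]
      have h1 : y k = ((c₂ (Fin.last n) : ℝ) - S) / (α k : ℝ) := by simp [hy]
      have h2 : ∑ i ∈ (Iprime n n').erase k, (α i : ℝ) * y i = S := by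
        refine Finset.sum_congr rfl fun i hi => ?_
        rw [Finset.mem_erase] at hi
        simp [hy, hi.1]
      rw [h1, h2]
      field_simp
      ring
    have hx1 : x ∈ CSet n b J₁ c₁ := by
      intro i hiJ
      by_cases hil : i = Fin.last n
      · subst hil
        rw [inner_last b α hlast]
        have h : ∑ i ∈ Iprime n n', (α i : ℝ) * ⟪x, b i⟫
            = ∑ i ∈ Iprime n n', (α i : ℝ) * y i :=
          Finset.sum_congr rfl fun i hi => by rw [hxy i (Iprime_ne_last hn'n hi)]
        rw [h, hsum]
        exact_mod_cast hcon hiJ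
      · rw [hxy i hil]
        have hik : i ≠ k := fun h => hkJ₁ (h ▸ hiJ)
        have : y i = (c₁ i : ℝ) + 1 := by simp [hy, hik]
        rw [this]
        linarith
    have hx2 := hC hx1 (Fin.last n) hj
    rw [inner_last b α hlast] at hx2
    have h : ∑ i ∈ Iprime n n', (α i : ℝ) * ⟪x, b i⟫
        = ∑ i ∈ Iprime n n', (α i : ℝ) * y i :=
      Finset.sum_congr rfl fun i hi => by rw [hxy i (Iprime_ne_last hn'n hi)]
    rw [h, hsum] at hx2
    exact lt_irrefl _ hx2
  · -- j ∈ I case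
    obtain ⟨k, hkI, hkj⟩ : ∃ k, k ∈ Iprime n n' ∧ k ≠ j := by
      by_cases hjI : j ∈ Iprime n n'
      · obtain ⟨k, hk1, hk2⟩ := Finset.not_subset.mp hJ₂I
        exact ⟨k, hk1, fun h => hk2 (h ▸ hj)⟩
      · refine ⟨⟨0, by omega⟩, mem_Iprime.mpr (by simpa using (show 0 < n' from hn'1)), fun h => ?_⟩
        exact hjI (h ▸ mem_Iprime.mpr (by simpa using (show 0 < n' from hn'1)))
    have hαk : (0 : ℝ) < (α k : ℝ) := by exact_mod_cast hα k (mem_Iprime.mp hkI)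
    set S : ℝ := ∑ i ∈ (Iprime n n').erase k,
      (α i : ℝ) * (if i = j then (c₂ j : ℝ) else (c₁ i : ℝ) + 1) with hS
    set yk : ℝ := max ((c₁ k : ℝ) + 1)
      (((c₁ (Fin.last n) : ℝ) + 1 - S) / (α k : ℝ)) with hyk
    set y : Fin (n + 1) → ℝ := fun i =>
      if i = j then (c₂ j : ℝ) else if i = k then yk else (c₁ i : ℝ) + 1 with hy
    obtain ⟨x, hxc⟩ := exists_inner_eq n b hspan (fun i => y i.castSucc)
    have hxy : ∀ i : Fin (n + 1), i ≠ Fin.last n → ⟪x, b i⟫ = y i := by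
      intro i hi
      have h := hxc (i.castPred hi)
      rwa [Fin.castSucc_castPred] at h
    have hsum : (c₁ (Fin.last n) : ℝ) + 1 ≤ ∑ i ∈ Iprime n n', (α i : ℝ) * y i := by
      rw [← Finset.add_sum_erase _ _ hkI]
      have h1 : y k = yk := by simp [hy, hkj]
      have h2 : ∑ i ∈ (Iprime n n').erase k, (α i : ℝ) * y i = S := by
        refine Finset.sum_congr rfl fun i hi => ?_
        rw [Finset.mem_erase] at hi
        by_cases hij : i = j
        · simp [hy, hij, hkj.symm]
        · simp [hy, hij, hi.1]
      have h3 : (c₁ (Fin.last n) : ℝ) + 1 - S ≤ (α k : ℝ) * yk := by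
        have h4 : ((c₁ (Fin.last n) : ℝ) + 1 - S) / (α k : ℝ) ≤ yk := le_max_right _ _
        calc (c₁ (Fin.last n) : ℝ) + 1 - S
            = (α k : ℝ) * (((c₁ (Fin.last n) : ℝ) + 1 - S) / (α k : ℝ)) := by
              field_simp
          _ ≤ (α k : ℝ) * yk := mul_le_mul_of_nonneg_left h4 hαk.le
      rw [h1, h2]
      linarith
    have hx1 : x ∈ CSet n b J₁ c₁ := by
      intro i hiJ
      by_cases hil : i = Fin.last n
      · subst hil
        rw [inner_last b α hlast]
        have h : ∑ i ∈ Iprime n n', (α i : ℝ) * ⟪x, b i⟫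
            = ∑ i ∈ Iprime n n', (α i : ℝ) * y i :=
          Finset.sum_congr rfl fun i hi => by rw [hxy i (Iprime_ne_last hn'n hi)]
        rw [h]
        linarith
      · rw [hxy i hil]
        by_cases hij : i = j
        · subst hij
          have h : y i = (c₂ i : ℝ) := by simp [hy]
          rw [h]
          exact_mod_cast hcon hiJ
        · by_cases hik : i = k
          · subst hik
            have h : y i = yk := by simp [hy, hij]
            rw [h]
            have := le_max_left ((c₁ i : ℝ) + 1)
              (((c₁ (Fin.last n) : ℝ) + 1 - S) / (α i : ℝ))
            rw [hyk]
            linarith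
          · have h : y i = (c₁ i : ℝ) + 1 := by simp [hy, hij, hik]
            rw [h]
            linarith
    have hx2 := hC hx1 j hj
    rw [hxy j hjl] at hx2
    have h : y j = (c₂ j : ℝ) := by simp [hy]
    rw [h] at hx2
    exact lt_irrefl _ hx2


/-- Setup B: for `J₁, J₂ ∈ Λ` with integer data `c¹, c²` (and a choice
of `i₀ ∈ I'∖J` for each of `J₁, J₂` that contains `n+1`): if `C(J₁,c¹) ⊆ C(J₂,c²)`,
then `F(J₁,c¹) ⊆ F(J₂,c²)`. -/
theorem stmt11 (n n' : ℕ) (hn'1 : 1 ≤ n') (hn'n : n' ≤ n)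
    (b : Fin (n + 1) → E n) (α : Fin (n + 1) → ℚ)
    (hb : LinearIndependent ℝ fun i : Fin n => b i.castSucc)
    (hspan : Submodule.span ℝ (Set.range fun i : Fin n => b i.castSucc) = ⊤)
    (hα : ∀ i : Fin (n + 1), i.val < n' → 0 < α i)
    (hαsum : ∑ i ∈ Iprime n n', α i ≤ 1)
    (hlast : b (Fin.last n) = ∑ i ∈ Iprime n n', (α i : ℝ) • b i)
    (J₁ J₂ : Finset (Fin (n + 1)))
    (hJ₁ne : J₁ ≠ Finset.univ) (hJ₁I : ¬ Iprime n n' ⊆ J₁)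
    (hJ₂ne : J₂ ≠ Finset.univ) (hJ₂I : ¬ Iprime n n' ⊆ J₂)
    (i₁₀ i₂₀ : Fin (n + 1))
    (hi₁₀ : Fin.last n ∈ J₁ → i₁₀ ∈ Iprime n n' \ J₁)
    (hi₂₀ : Fin.last n ∈ J₂ → i₂₀ ∈ Iprime n n' \ J₂)
    (c₁ c₂ : Fin (n + 1) → ℤ)
    (hC : CSet n b J₁ c₁ ⊆ CSet n b J₂ c₂) :
    FSetB' n n' b α J₁ i₁₀ c₁ ⊆ FSetB' n n' b α J₂ i₂₀ c₂ := by
  have hex := extract hn'1 hn'n b α hspan hα hlast hJ₁I hJ₂I hC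
  by_cases h2 : Fin.last n ∈ J₂
  · -- main case : `n+1 ∈ J₂ ⊆ J₁`
    have h1 : Fin.last n ∈ J₁ := (hex _ h2).1
    have hclast : c₂ (Fin.last n) ≤ c₁ (Fin.last n) := (hex _ h2).2
    obtain ⟨hi₁I, hi₁J⟩ := Finset.mem_sdiff.mp (hi₁₀ h1)
    obtain ⟨hi₂I, hi₂J⟩ := Finset.mem_sdiff.mp (hi₂₀ h2)
    rw [FSetB', FSetB', if_pos h1, if_pos h2]
    rintro x ⟨m, hm, hx⟩
    set L := Lfun n n' α J₁ i₁₀ c₁ m with hLdef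
    set m' : Fin (n + 1) → ℤ := fun i => L i - (if i ∈ J₂ then c₂ i else 0) with hm'
    -- the two rewriting identities for (J₂, c₂, m')
    have hid1 : ∀ i ∈ Iprime n n' ∩ J₂, c₂ i + m' i = L i := by
      intro i hi
      rw [Finset.mem_inter] at hi
      simp only [hm', if_pos hi.2]
      ring
    have hid2 : ∀ i ∈ (Iprime n n' \ J₂).erase i₂₀, m' i = L i := by
      intro i hi
      rw [Finset.mem_erase, Finset.mem_sdiff] at hi
      simp only [hm', if_neg hi.2.2]
      ring
    have hLsum := L_sum α J₁ hα hi₁I hi₁J c₁ m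
    have hsum2 : (c₂ (Fin.last n) : ℚ) ≤ ∑ i ∈ Iprime n n', α i * (L i : ℚ) := by
      calc (c₂ (Fin.last n) : ℚ) ≤ (c₁ (Fin.last n) : ℚ) := by exact_mod_cast hclast
        _ ≤ _ := hLsum
    have hLlt := L_lt hx
    refine ⟨m', ?_, ?_, ?_, ?_, ?_⟩
    · -- admissible
      intro i hi
      rw [Finset.mem_inter] at hi
      have hiJ₁ : i ∈ J₁ := (hex i hi.2).1
      have hc : c₂ i ≤ c₁ i := (hex i hi.2).2
      have hmi : 0 ≤ m i := hm i (Finset.mem_inter.mpr ⟨hi.1, hiJ₁⟩)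
      simp only [hm', if_pos hi.2, hLdef, Lfun, if_pos hiJ₁]
      omega
    · -- condition 1
      intro i hi
      have hval : (c₂ i : ℝ) + (m' i : ℝ) = (L i : ℝ) := by
        have := hid1 i hi
        exact_mod_cast congrArg (Int.cast : ℤ → ℝ) this
      rw [hval]
      exact hLlt i (Finset.mem_inter.mp hi).1
    · -- condition 2
      intro i hi
      have hval : (m' i : ℝ) = (L i : ℝ) := by
        exact_mod_cast congrArg (Int.cast : ℤ → ℝ) (hid2 i hi)
      rw [hval]
      have hiI : i ∈ Iprime n n' :=
        (Finset.mem_sdiff.mp (Finset.mem_of_mem_erase hi)).1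
      exact hLlt i hiI
    · -- condition 3
      intro i hi
      rw [Finset.mem_erase, Finset.mem_sdiff] at hi
      have hiJ₁ : i ∈ J₁ := (hex i hi.2.1).1
      have hc : c₂ i ≤ c₁ i := (hex i hi.2.1).2
      have := hx.2.2.1 i
        (Finset.mem_erase.mpr ⟨hi.1, Finset.mem_sdiff.mpr ⟨hiJ₁, hi.2.2⟩⟩)
      have hcc : (c₂ i : ℝ) ≤ (c₁ i : ℝ) := by exact_mod_cast hc
      linarith
    · -- condition 4 : the ceiling bound
      have hle : ceilB n n' α J₂ i₂₀ c₂ m' ≤ L i₂₀ := by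
        have h1' : ∀ i ∈ Iprime n n' ∩ J₂, c₂ i + m' i = L i := hid1
        have h2' : ∀ i ∈ (Iprime n n' \ J₂).erase i₂₀, m' i = L i := hid2
        exact ceilB_le α J₂ hα hi₂I hi₂J c₂ m' L h1' h2' hsum2
      have hlt := hLlt i₂₀ hi₂I
      have : (ceilB n n' α J₂ i₂₀ c₂ m' : ℝ) ≤ (L i₂₀ : ℝ) := by exact_mod_cast hle
      linarith
  · by_cases h1 : Fin.last n ∈ J₁
    · rw [FSetB', FSetB', if_pos h1, if_neg h2]
      rintro x ⟨m, hm, hx⟩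
      obtain ⟨hi₁I, hi₁J⟩ := Finset.mem_sdiff.mp (hi₁₀ h1)
      exact hC (VSet_subset_CSet hn'1 hn'n hα hlast hi₁I hi₁J hm hx)
    · rw [FSetB', FSetB', if_neg h1, if_neg h2]
      exact hC
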